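/- Let μ be a probability measure on ℝ with μ((0,∞)) = 1 and ∫ (1/ε) dμ(ε) < ∞, let g(x) = ∫ (ε/2)·exp(−ε·|x|) dμ(ε), and let M(t) = ∫ exp(t·ε) dμ(ε). Then the expected ℓ₁ error of the mixture Laplace mechanism satisfies ∫_ℝ |x|·g(x) dx = ∫_0^∞ M(−x) dx. -/

import Mathlib

open MeasureTheory Real

lemma my_integrable_comp_abs {f : ℝ → ℝ}
    (hf : IntegrableOn (fun x => f |x|) (Set.Ioi 0)) :
    Integrable fun x : ℝ => f |x| := by
  have int_Iic : IntegrableOn (fun x ↦ f |x|) (Set.Iic 0) := by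
    rw [← Measure.map_neg_eq_self (volume : Measure ℝ)]
    have m : MeasurableEmbedding fun x : ℝ => -x :=
      (Homeomorph.neg ℝ).measurableEmbedding
    rw [m.integrableOn_map_iff]
    simp_rw [Function.comp_def, abs_neg, Set.neg_preimage, Set.neg_Iic, neg_zero]
    exact Iff.mpr integrableOn_Ici_iff_integrableOn_Ioi hf
  have h := int_Iic.union hf
  rwa [Set.Iic_union_Ioi, integrableOn_univ] at h

lemma my_gamma_two : Real.Gamma 2 = 1 := by
  rw [show (2 : ℝ) = 1 + 1 by norm_num, Real.Gamma_add_one one_ne_zero, Real.Gamma_one, mul_one]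

lemma my_int_R {ε : ℝ} (hε : 0 < ε) :
    ∫ x in Set.Ioi (0 : ℝ), Real.exp (-(x * ε)) = 1 / ε := by
  have h : ∀ x ∈ Set.Ioi (0 : ℝ), Real.exp (-(x * ε)) = x ^ ((1 : ℝ) - 1) * Real.exp (-(ε * x)) := by
    intro x hx
    rw [sub_self, Real.rpow_zero, one_mul, mul_comm]
  rw [setIntegral_congr_fun measurableSet_Ioi h,
    Real.integral_rpow_mul_exp_neg_mul_Ioi one_pos hε, Real.rpow_one, Real.Gamma_one, mul_one]

lemma my_intble_R {ε : ℝ} (hε : 0 < ε) :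
    IntegrableOn (fun x : ℝ => Real.exp (-(x * ε))) (Set.Ioi 0) := by
  have h := exp_neg_integrableOn_Ioi 0 hε
  refine h.congr_fun (fun x _ => ?_) measurableSet_Ioi
  dsimp only
  rw [neg_mul, mul_comm]

lemma my_intble_L0 {ε : ℝ} (hε : 0 < ε) :
    IntegrableOn (fun x : ℝ => x * (ε / 2 * Real.exp (-(ε * x)))) (Set.Ioi 0) := by
  have h := (integrableOn_rpow_mul_exp_neg_mul_rpow (s := 1) (p := 1)
    (by norm_num) one_pos hε).const_mul (ε / 2)
  refine IntegrableOn.congr_fun h (fun x _ => ?_) measurableSet_Ioi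
  rw [Real.rpow_one, neg_mul]
  ring

lemma my_intble_L {ε : ℝ} (hε : 0 < ε) :
    Integrable (fun x : ℝ => |x| * (ε / 2 * Real.exp (-(ε * |x|)))) := by
  have h1 : IntegrableOn (fun x : ℝ => |x| * (ε / 2 * Real.exp (-(ε * |x|)))) (Set.Ioi 0) :=
    IntegrableOn.congr_fun (my_intble_L0 hε)
      (fun x hx => by rw [abs_of_pos hx]) measurableSet_Ioi
  exact my_integrable_comp_abs (f := fun x => x * (ε / 2 * Real.exp (-(ε * x)))) h1

lemma my_int_L {ε : ℝ} (hε : 0 < ε) :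
    ∫ x : ℝ, |x| * (ε / 2 * Real.exp (-(ε * |x|))) = 1 / ε := by
  rw [integral_comp_abs (f := fun x => x * (ε / 2 * Real.exp (-(ε * x))))]
  have h2 : ∫ x in Set.Ioi (0 : ℝ), x * (ε / 2 * Real.exp (-(ε * x)))
      = ε / 2 * ∫ x in Set.Ioi (0 : ℝ), x * Real.exp (-(ε * x)) := by
    rw [← integral_const_mul]
    refine setIntegral_congr_fun measurableSet_Ioi (fun x _ => ?_)
    ring
  have h3 : ∫ x in Set.Ioi (0 : ℝ), x * Real.exp (-(ε * x))
      = (1 / ε) ^ (2 : ℝ) * Real.Gamma 2 := by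
    rw [← Real.integral_rpow_mul_exp_neg_mul_Ioi (by norm_num : (0 : ℝ) < 2) hε]
    refine setIntegral_congr_fun measurableSet_Ioi (fun x _ => ?_)
    rw [show (2 : ℝ) - 1 = 1 by norm_num, Real.rpow_one]
  rw [h2, h3, my_gamma_two, mul_one,
    show ((2 : ℝ)) = ((2 : ℕ) : ℝ) by norm_num, Real.rpow_natCast]
  field_simp

/-- The expected `ℓ₁` error (expected absolute value of the added noise) of the mixture
Laplace mechanism equals `∫_0^∞ M(−x) dx`, where `M` is the moment generating function of
the distribution `μ` of the reciprocal scale `1/b`. -/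
theorem mixture_laplace_l1_error
    (μ : Measure ℝ) [IsProbabilityMeasure μ] (hμ : μ (Set.Ioi 0) = 1)
    (hint : Integrable (fun ε : ℝ => 1 / ε) μ)
    (g : ℝ → ℝ)
    (hg : ∀ x : ℝ, g x = ∫ ε, (ε / 2) * Real.exp (-(ε * |x|)) ∂μ)
    (M : ℝ → ℝ)
    (hM : ∀ t : ℝ, M t = ∫ ε, Real.exp (t * ε) ∂μ) :
    ∫ x : ℝ, |x| * g x = ∫ x in Set.Ioi (0 : ℝ), M (-x) := by
  classical
  -- a.e. positivity of ε
  have hcompl : μ (Set.Iic 0) = 0 := by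
    have h := measure_compl (measurableSet_Ioi (a := (0 : ℝ))) (measure_ne_top μ _)
    rw [Set.compl_Ioi, measure_univ, hμ, tsub_self] at h
    exact h
  have hae : ∀ᵐ ε ∂μ, 0 < ε := by
    have hs : {ε : ℝ | ¬ 0 < ε} = Set.Iic 0 := by ext x; simp [not_lt]
    rw [ae_iff, hs]
    exact hcompl
  -- the two kernels
  set F : ℝ → ℝ → ENNReal := fun x ε => ENNReal.ofReal (|x| * (ε / 2 * Real.exp (-(ε * |x|))))
    with hF
  set G : ℝ → ℝ → ENNReal := fun x ε => ENNReal.ofReal (Real.exp (-(x * ε))) with hG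
  have mF : Measurable (Function.uncurry F) := by
    apply Measurable.ennreal_ofReal
    fun_prop
  have mG : Measurable (Function.uncurry G) := by
    apply Measurable.ennreal_ofReal
    fun_prop
  have mFx : Measurable fun x => ∫⁻ ε, F x ε ∂μ := mF.lintegral_prod_right
  have mGx : Measurable fun x => ∫⁻ ε, G x ε ∂μ := mG.lintegral_prod_right
  -- the inner lintegrals
  have hL : ∀ᵐ ε ∂μ, ∫⁻ x : ℝ, F x ε = ENNReal.ofReal (1 / ε) := by
    filter_upwards [hae] with ε hε
    simp only [hF]
    rw [← ofReal_integral_eq_lintegral_ofReal (my_intble_L hε)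
      (ae_of_all _ fun x => mul_nonneg (abs_nonneg _)
        (mul_nonneg (by linarith) (Real.exp_pos _).le)), my_int_L hε]
  have hR : ∀ᵐ ε ∂μ, ∫⁻ x in Set.Ioi (0 : ℝ), G x ε = ENNReal.ofReal (1 / ε) := by
    filter_upwards [hae] with ε hε
    simp only [hG]
    rw [← ofReal_integral_eq_lintegral_ofReal (my_intble_R hε)
      (ae_of_all _ fun x => (Real.exp_pos _).le), my_int_R hε]
  -- Tonelli swaps
  have swapL : ∫⁻ x : ℝ, ∫⁻ ε, F x ε ∂μ = ∫⁻ ε, (∫⁻ x : ℝ, F x ε) ∂μ :=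
    lintegral_lintegral_swap mF.aemeasurable
  have swapR : ∫⁻ x in Set.Ioi (0 : ℝ), ∫⁻ ε, G x ε ∂μ
      = ∫⁻ ε, (∫⁻ x in Set.Ioi (0 : ℝ), G x ε) ∂μ :=
    lintegral_lintegral_swap mG.aemeasurable
  have hT : ∫⁻ ε, ENNReal.ofReal (1 / ε) ∂μ = ENNReal.ofReal (∫ ε, 1 / ε ∂μ) :=
    (ofReal_integral_eq_lintegral_ofReal hint
      (hae.mono fun ε hε => one_div_nonneg.mpr hε.le)).symm
  have hLtot : ∫⁻ x : ℝ, ∫⁻ ε, F x ε ∂μ = ENNReal.ofReal (∫ ε, 1 / ε ∂μ) := by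
    rw [swapL, lintegral_congr_ae hL, hT]
  have hRtot : ∫⁻ x in Set.Ioi (0 : ℝ), ∫⁻ ε, G x ε ∂μ
      = ENNReal.ofReal (∫ ε, 1 / ε ∂μ) := by
    rw [swapR, lintegral_congr_ae hR, hT]
  have hfin : ENNReal.ofReal (∫ ε, 1 / ε ∂μ) ≠ ⊤ := ENNReal.ofReal_ne_top
  -- convert LHS
  have hlhs : ∫ x : ℝ, |x| * g x = (∫⁻ x : ℝ, ∫⁻ ε, F x ε ∂μ).toReal := by
    have hx : ∀ x : ℝ, |x| * g x = (∫⁻ ε, F x ε ∂μ).toReal := by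
      intro x
      rw [hg x, ← integral_const_mul,
        integral_eq_lintegral_of_nonneg_ae
          (hae.mono fun ε hε => mul_nonneg (abs_nonneg _)
            (mul_nonneg (by linarith) (Real.exp_pos _).le))
          (Continuous.aestronglyMeasurable (by fun_prop))]
    simp_rw [hx]
    exact integral_toReal mFx.aemeasurable
      (ae_lt_top mFx (by rw [hLtot]; exact hfin))
  -- convert RHS
  have hrhs : ∫ x in Set.Ioi (0 : ℝ), M (-x)
      = (∫⁻ x in Set.Ioi (0 : ℝ), ∫⁻ ε, G x ε ∂μ).toReal := by
    have hx : ∀ x : ℝ, M (-x) = (∫⁻ ε, G x ε ∂μ).toReal := by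
      intro x
      rw [hM, integral_eq_lintegral_of_nonneg_ae
        (ae_of_all _ fun ε => (Real.exp_pos _).le)
        (Continuous.aestronglyMeasurable (by fun_prop))]
      simp only [hG, neg_mul]
    simp_rw [hx]
    exact integral_toReal mGx.aemeasurable
      (ae_lt_top mGx (by rw [hRtot]; exact hfin))
  rw [hlhs, hrhs, hLtot, hRtot]
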